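/- Let a, b, c ∈ ℝ with a ≠ 0, b ≠ 0, a² + b² + c² = 1, a − b − c ≥ −1, b − a − c ≥ −1, and 2c(c+1) ≥ 2ab + 1. Let ρ = diag(3/4, 0, 0, 1/4) and ρ̃ = (1/4)·(1₄ + (1/2)·σ₃⊗1₂ + (1/2)·1₂⊗σ₃ + a·σ₁⊗σ₂ + b·σ₂⊗σ₁ + c·σ₃⊗σ₃). Then there exist no U₁, U₂ ∈ SU(2) with ρ̃ = (U₁ ⊗ U₂) ρ (U₁ ⊗ U₂)†. -/

import Mathlib

open Matrix Complex BigOperators Kronecker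
open scoped ComplexOrder

/-- The three Pauli matrices σ₁, σ₂, σ₃ (indexed by `Fin 3`). -/
noncomputable def pauli : Fin 3 → Matrix (Fin 2) (Fin 2) ℂ
  | 0 => !![0, 1; 1, 0]
  | 1 => !![0, -Complex.I; Complex.I, 0]
  | 2 => !![1, 0; 0, -1]

/-- Membership in SU(2): unitary 2×2 complex matrix of determinant 1. -/
def IsSU2 (U : Matrix (Fin 2) (Fin 2) ℂ) : Prop := Uᴴ * U = 1 ∧ U.det = 1

/-- The separable state `ρ = diag(3/4, 0, 0, 1/4)` (basis ordering |00⟩,|01⟩,|10⟩,|11⟩). -/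
noncomputable def rhoCE : Matrix (Fin 2 × Fin 2) (Fin 2 × Fin 2) ℂ :=
  Matrix.diagonal fun p =>
    if p = ((0 : Fin 2), (0 : Fin 2)) then (3 / 4 : ℂ)
    else if p = ((1 : Fin 2), (1 : Fin 2)) then (1 / 4 : ℂ) else 0

/-- The state `ρ̃ = (1/4)(1₄ + (1/2) σ₃⊗1 + (1/2) 1⊗σ₃ + a σ₁⊗σ₂ + b σ₂⊗σ₁ + c σ₃⊗σ₃)`. -/
noncomputable def rhoTilde (a b c : ℝ) : Matrix (Fin 2 × Fin 2) (Fin 2 × Fin 2) ℂ :=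
  (1 / 4 : ℂ) • ((1 : Matrix (Fin 2 × Fin 2) (Fin 2 × Fin 2) ℂ)
    + (1 / 2 : ℂ) • (pauli 2 ⊗ₖ (1 : Matrix (Fin 2) (Fin 2) ℂ))
    + (1 / 2 : ℂ) • ((1 : Matrix (Fin 2) (Fin 2) ℂ) ⊗ₖ pauli 2)
    + (a : ℂ) • (pauli 0 ⊗ₖ pauli 1)
    + (b : ℂ) • (pauli 1 ⊗ₖ pauli 0)
    + (c : ℂ) • (pauli 2 ⊗ₖ pauli 2))

/-- For `a ≠ 0`, `b ≠ 0` and the stated constraints on `a, b, c`, the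
states `ρ = diag(3/4,0,0,1/4)` and `ρ̃` are not local-unitary equivalent. -/
theorem counterexample_not_LU_equivalent (a b c : ℝ)
    (ha : a ≠ 0) (hb : b ≠ 0)
    (hnorm : a ^ 2 + b ^ 2 + c ^ 2 = 1)
    (h1 : a - b - c ≥ -1) (h2 : b - a - c ≥ -1)
    (h3 : 2 * c * (c + 1) ≥ 2 * a * b + 1) :
    ¬ ∃ U₁ U₂ : Matrix (Fin 2) (Fin 2) ℂ, IsSU2 U₁ ∧ IsSU2 U₂ ∧
        rhoTilde a b c = (U₁ ⊗ₖ U₂) * rhoCE * (U₁ ⊗ₖ U₂)ᴴ := by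

  rintro ⟨U₁, U₂, ⟨hU₁, -⟩, ⟨hU₂, -⟩, heq⟩
  have hU₁' : U₁ * U₁ᴴ = 1 := mul_eq_one_comm.mp hU₁
  have hU₂' : U₂ * U₂ᴴ = 1 := mul_eq_one_comm.mp hU₂
  have key : ∀ p q, rhoTilde a b c p q = ((U₁ ⊗ₖ U₂) * rhoCE * (U₁ ⊗ₖ U₂)ᴴ) p q :=
    fun p q => congrFun (congrFun heq p) q
  -- column norms of U₁
  have c1 := congrFun (congrFun hU₁ 0) 0
  have c2 := congrFun (congrFun hU₁ 1) 1
  -- row norms of U₁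
  have r1 := congrFun (congrFun hU₁' 0) 0
  -- column norms of U₂
  have n2a := congrFun (congrFun hU₂ 0) 0
  have n2b := congrFun (congrFun hU₂ 1) 1
  -- row norm of U₂
  have r2 := congrFun (congrFun hU₂' 0) 0
  simp [Matrix.mul_apply, Fin.sum_univ_two, Matrix.conjTranspose_apply,
    Matrix.one_apply] at c1 c2 r1 n2a n2b r2
  have e1 := key (0,0) (0,0)
  have e2 := key (0,1) (0,1)
  have e3 := key (1,0) (1,0)
  simp [rhoTilde, rhoCE, pauli, Matrix.mul_apply, Matrix.kroneckerMap_apply,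
    Matrix.conjTranspose_apply, Fintype.sum_prod_type, Fin.sum_univ_two,
    Matrix.diagonal_apply, Matrix.one_apply, Prod.ext_iff] at e1 e2 e3
  have hA : (U₁ 0 1) * (starRingEnd ℂ) (U₁ 0 1) = 0 := by
    linear_combination 2*e1 + 2*e2 + (3/2)*((U₁ 0 0) * (starRingEnd ℂ) (U₁ 0 0))*n2a
      + (1/2)*((U₁ 0 1) * (starRingEnd ℂ) (U₁ 0 1))*n2b + (3/2)*r1
  have hB : (U₂ 0 1) * (starRingEnd ℂ) (U₂ 0 1) = 0 := by
    linear_combination 2*e1 + 2*e3 + (3/2)*((U₂ 0 0) * (starRingEnd ℂ) (U₂ 0 0))*c1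
      + (1/2)*((U₂ 0 1) * (starRingEnd ℂ) (U₂ 0 1))*c2 + (3/2)*r2
  rw [Complex.mul_conj] at hA hB
  have hAZ : (U₁ 0 1) = 0 := Complex.normSq_eq_zero.mp (by exact_mod_cast hA)
  have hBZ : (U₂ 0 1) = 0 := Complex.normSq_eq_zero.mp (by exact_mod_cast hB)
  rw [hAZ] at r1; simp at r1
  rw [hBZ] at r2; simp at r2
  have hC : (U₁ 1 0) * (starRingEnd ℂ) (U₁ 1 0) = 0 := by linear_combination c1 - r1
  have hD : (U₂ 1 0) * (starRingEnd ℂ) (U₂ 1 0) = 0 := by linear_combination n2a - r2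
  rw [Complex.mul_conj] at hC hD
  have hCZ : (U₁ 1 0) = 0 := Complex.normSq_eq_zero.mp (by exact_mod_cast hC)
  have hDZ : (U₂ 1 0) = 0 := Complex.normSq_eq_zero.mp (by exact_mod_cast hD)
  have e4 := key (0,0) (1,1)
  have e5 := key (0,1) (1,0)
  simp [rhoTilde, rhoCE, pauli, Matrix.mul_apply, Matrix.kroneckerMap_apply,
    Matrix.conjTranspose_apply, Fintype.sum_prod_type, Fin.sum_univ_two,
    Matrix.diagonal_apply, Matrix.one_apply, Prod.ext_iff,
    hAZ, hBZ, hCZ, hDZ] at e4 e5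
  have hab1 : (a : ℂ) + b = 0 := by
    have := e4
    linear_combination Complex.I * this + ((a:ℂ)+b) * Complex.I_sq
  have hab2 : (a : ℂ) - b = 0 := by
    have := e5
    linear_combination (-Complex.I) * this + ((a:ℂ)-b) * Complex.I_sq
  have : (a : ℂ) = 0 := by linear_combination (hab1 + hab2) / 2
  exact ha (by exact_mod_cast this)
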